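/- Let A be a commutative ring containing ℚ and let H be an n×n matrix over A[[x]] whose constant term H(0) is a nilpotent matrix over A. Define ∇ : A[[x]]ⁿ → A[[x]]ⁿ by ∇(v) = x·v′ + H·v. Let V := {v ∈ A[[x]]ⁿ : ∇^N(v) = 0 for some N ∈ ℕ}. Then V is an A-submodule of A[[x]]ⁿ which is free of rank n over A, V is stable under ∇, the restriction of ∇ to V is A-linear and nilpotent, and the natural A[[x]]-linear map A[[x]] ⊗_A V → A[[x]]ⁿ is bijective. -/

import Mathlib

set_option linter.unusedSectionVars false

open PowerSeries Finset

namespace Stmt3Aux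

variable {A : Type*} [CommRing A] [Algebra ℚ A] {n : ℕ}

/-- coefficient matrices of `H` -/
noncomputable def Hc (H : Matrix (Fin n) (Fin n) (PowerSeries A)) (l : ℕ) :
    Matrix (Fin n) (Fin n) A := H.map (coeff l)

/-- the operator `v ↦ x v' + H v + m v` -/
noncomputable def Dm (H : Matrix (Fin n) (Fin n) (PowerSeries A)) (m : ℕ)
    (v : Fin n → PowerSeries A) : Fin n → PowerSeries A :=
  fun i => X * derivative A (v i) + H.mulVec v i + m • v i

/-- coefficient vectors -/
noncomputable def cvec (k : ℕ) (v : Fin n → PowerSeries A) : Fin n → A :=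
  fun i => coeff k (v i)

lemma natCast_isUnit (m : ℕ) (hm : 1 ≤ m) : IsUnit ((m : A)) := by
  have h : IsUnit ((m : ℚ)) := isUnit_iff_ne_zero.mpr (Nat.cast_ne_zero.mpr (by omega))
  have h2 := h.map (algebraMap ℚ A)
  rwa [map_natCast] at h2

lemma cvec_zero_Dm (H : Matrix (Fin n) (Fin n) (PowerSeries A)) (m : ℕ)
    (v : Fin n → PowerSeries A) :
    cvec 0 (Dm H m v) = (Hc H 0 + (m : A) • 1).mulVec (cvec 0 v) := by
  rw [Matrix.add_mulVec, Matrix.smul_mulVec, Matrix.one_mulVec]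
  funext i
  simp only [cvec, Dm, map_add, coeff_zero_X_mul, zero_add, Pi.add_apply, Pi.smul_apply,
    Matrix.mulVec, dotProduct, Hc, Matrix.map_apply, map_sum, smul_eq_mul]
  rw [map_nsmul]
  simp [coeff_zero_eq_constantCoeff_apply, map_mul, nsmul_eq_mul]

lemma cvec_zero_iter (H : Matrix (Fin n) (Fin n) (PowerSeries A)) (m : ℕ)
    (v : Fin n → PowerSeries A) (N : ℕ) :
    cvec 0 ((Dm H m)^[N] v) = ((Hc H 0 + (m : A) • 1) ^ N).mulVec (cvec 0 v) := by
  induction N with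
  | zero => simp [Matrix.one_mulVec]
  | succ N ih =>
    rw [Function.iterate_succ_apply', cvec_zero_Dm, ih, Matrix.mulVec_mulVec, ← pow_succ']

lemma B_isUnit (H : Matrix (Fin n) (Fin n) (PowerSeries A)) (hH : IsNilpotent (Hc H 0))
    (m : ℕ) (hm : 1 ≤ m) :
    IsUnit (Hc H 0 + (m : A) • (1 : Matrix (Fin n) (Fin n) A)) := by
  have hu : IsUnit ((m : A) • (1 : Matrix (Fin n) (Fin n) A)) := by
    rw [← Algebra.algebraMap_eq_smul_one]
    exact (natCast_isUnit m hm).map (algebraMap A _)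
  exact hH.isUnit_add_right_of_commute hu ((Commute.one_right _).smul_right _)

lemma mulVec_eq_zero {M : Matrix (Fin n) (Fin n) A} (hM : IsUnit M) {x : Fin n → A}
    (h : M.mulVec x = 0) : x = 0 := by
  obtain ⟨u, hu⟩ := hM
  have h1 : ((↑u⁻¹ : Matrix (Fin n) (Fin n) A) * M) = 1 := by rw [← hu]; exact u.inv_mul
  calc x = ((↑u⁻¹ : Matrix (Fin n) (Fin n) A) * M).mulVec x := by rw [h1, Matrix.one_mulVec]
  _ = (↑u⁻¹ : Matrix (Fin n) (Fin n) A).mulVec (M.mulVec x) := (Matrix.mulVec_mulVec ..).symm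
  _ = 0 := by rw [h, Matrix.mulVec_zero]

lemma cvec_zero_of_iter (H : Matrix (Fin n) (Fin n) (PowerSeries A))
    (hH : IsNilpotent (Hc H 0)) (m : ℕ) (hm : 1 ≤ m)
    (v : Fin n → PowerSeries A) (N : ℕ) (hv : (Dm H m)^[N] v = 0) : cvec 0 v = 0 := by
  apply mulVec_eq_zero ((B_isUnit H hH m hm).pow N)
  rw [← cvec_zero_iter, hv]
  funext i; simp [cvec]

lemma Dm_X_smul (H : Matrix (Fin n) (Fin n) (PowerSeries A)) (m : ℕ)
    (w : Fin n → PowerSeries A) :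
    Dm H m (fun i => X * w i) = fun i => X * Dm H (m + 1) w i := by
  funext i
  have hd : derivative A (X * w i) = X * derivative A (w i) + w i := by
    rw [Derivation.leibniz]
    simp [smul_eq_mul, derivative_X]
  have hm : H.mulVec (fun j => X * w j) i = X * H.mulVec w i := by
    simp only [Matrix.mulVec, dotProduct, Finset.mul_sum]
    exact Finset.sum_congr rfl fun j _ => by ring
  simp only [Dm, hd, hm]
  rw [nsmul_eq_mul, nsmul_eq_mul]
  push_cast
  ring

lemma Dm_iter_X_smul (H : Matrix (Fin n) (Fin n) (PowerSeries A)) (m : ℕ)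
    (w : Fin n → PowerSeries A) (N : ℕ) :
    (Dm H m)^[N] (fun i => X * w i) = fun i => X * (Dm H (m + 1))^[N] w i := by
  induction N generalizing w with
  | zero => simp
  | succ N ih =>
    rw [Function.iterate_succ_apply, Dm_X_smul, ih, Function.iterate_succ_apply]

lemma X_mul_eq_zero {f : PowerSeries A} (h : X * f = 0) : f = 0 := by
  ext k
  have := congrArg (coeff (k + 1)) h
  simpa [coeff_succ_X_mul] using this

lemma cvec_of_iter (H : Matrix (Fin n) (Fin n) (PowerSeries A))
    (hH : IsNilpotent (Hc H 0)) :
    ∀ (k m : ℕ), 1 ≤ m → ∀ (v : Fin n → PowerSeries A) (N : ℕ),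
      (Dm H m)^[N] v = 0 → cvec k v = 0 := by
  intro k
  induction k with
  | zero => exact fun m hm v N hv => cvec_zero_of_iter H hH m hm v N hv
  | succ k ih =>
    intro m hm v N hv
    have h0 := cvec_zero_of_iter H hH m hm v N hv
    have hw : ∀ i, ∃ g, v i = X * g := by
      intro i
      refine X_dvd_iff.mpr ?_
      have := congrFun h0 i
      simpa [cvec, coeff_zero_eq_constantCoeff_apply] using this
    choose w hwv using hw
    have hveq : v = fun i => X * w i := funext hwv
    rw [hveq, Dm_iter_X_smul] at hv
    have hz : (Dm H (m + 1))^[N] w = 0 := by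
      funext i
      exact X_mul_eq_zero (by simpa using congrFun hv i)
    have hik := ih (m + 1) (by omega) w N hz
    funext i
    have h1 : cvec (k + 1) v i = cvec k w i := by
      simp [cvec, hwv i, coeff_succ_X_mul]
    rw [h1, hik]

lemma eq_zero_of_iter (H : Matrix (Fin n) (Fin n) (PowerSeries A))
    (hH : IsNilpotent (Hc H 0)) (v : Fin n → PowerSeries A) (N : ℕ)
    (hv : (Dm H 0)^[N] v = 0) (h0 : cvec 0 v = 0) : v = 0 := by
  have hw : ∀ i, ∃ g, v i = X * g := by
    intro i
    refine X_dvd_iff.mpr ?_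
    have := congrFun h0 i
    simpa [cvec, coeff_zero_eq_constantCoeff_apply] using this
  choose w hwv using hw
  have hveq : v = fun i => X * w i := funext hwv
  rw [hveq, Dm_iter_X_smul] at hv
  have hz : (Dm H 1)^[N] w = 0 := by
    funext i
    exact X_mul_eq_zero (by simpa using congrFun hv i)
  have hw0 : w = 0 := by
    funext i
    ext k
    have := congrFun (cvec_of_iter H hH k 1 le_rfl w N hz) i
    simpa [cvec] using this
  rw [hveq, hw0]
  funext i; simp


/-- the endomorphism `M ↦ k M + H₀ M - M H₀` -/
noncomputable def Phi (H : Matrix (Fin n) (Fin n) (PowerSeries A)) (k : ℕ) :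
    Module.End A (Matrix (Fin n) (Fin n) A) :=
  (k : A) • (1 : Module.End A (Matrix (Fin n) (Fin n) A)) +
    (LinearMap.mulLeft A (Hc H 0) - LinearMap.mulRight A (Hc H 0))

lemma Phi_apply (H : Matrix (Fin n) (Fin n) (PowerSeries A)) (k : ℕ)
    (M : Matrix (Fin n) (Fin n) A) :
    Phi H k M = (k : A) • M + (Hc H 0 * M - M * Hc H 0) := by
  simp [Phi, LinearMap.add_apply, LinearMap.sub_apply, LinearMap.smul_apply,
    LinearMap.mulLeft_apply, LinearMap.mulRight_apply]

lemma Phi_isUnit (H : Matrix (Fin n) (Fin n) (PowerSeries A)) (hH : IsNilpotent (Hc H 0))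
    (k : ℕ) (hk : 1 ≤ k) : IsUnit (Phi H k) := by
  have hn : IsNilpotent (LinearMap.mulLeft A (Hc H 0) - LinearMap.mulRight A (Hc H 0)) :=
    Commute.isNilpotent_sub (LinearMap.commute_mulLeft_right _ _)
      ((LinearMap.isNilpotent_mulLeft_iff A _).mpr hH)
      ((LinearMap.isNilpotent_mulRight_iff A _).mpr hH)
  have hu : IsUnit ((k : A) • (1 : Module.End A (Matrix (Fin n) (Fin n) A))) := by
    rw [← Algebra.algebraMap_eq_smul_one]
    exact (natCast_isUnit k hk).map (algebraMap A _)
  rw [Phi, add_comm]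
  exact hn.isUnit_add_right_of_commute hu ((Commute.one_right _).smul_right _)

/-- coefficients of the fundamental solution matrix -/
noncomputable def Pc (H : Matrix (Fin n) (Fin n) (PowerSeries A)) :
    ℕ → Matrix (Fin n) (Fin n) A
  | 0 => 1
  | (k + 1) => Ring.inverse (Phi H (k + 1))
      (- ∑ i ∈ (Finset.range (k + 1)).attach, Hc H (k + 1 - (i : ℕ)) * Pc H i)
decreasing_by exact Finset.mem_range.mp i.2

lemma Pc_zero (H : Matrix (Fin n) (Fin n) (PowerSeries A)) : Pc H 0 = 1 := by
  rw [Pc]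

lemma Phi_Pc (H : Matrix (Fin n) (Fin n) (PowerSeries A)) (hH : IsNilpotent (Hc H 0))
    (k : ℕ) :
    Phi H (k + 1) (Pc H (k + 1)) = - ∑ i ∈ Finset.range (k + 1), Hc H (k + 1 - i) * Pc H i := by
  rw [Pc]
  have h := Phi_isUnit H hH (k + 1) (by omega)
  have h1 : Phi H (k + 1) * Ring.inverse (Phi H (k + 1)) = 1 := Ring.mul_inverse_cancel _ h
  have h2 : ∀ M : Matrix (Fin n) (Fin n) A,
      Phi H (k + 1) ((Ring.inverse (Phi H (k + 1))) M) = M := by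
    intro M
    have := congrArg (fun f : Module.End A (Matrix (Fin n) (Fin n) A) => f M) h1
    simpa [Module.End.mul_apply] using this
  rw [h2]
  congr 1
  exact Finset.sum_attach (Finset.range (k + 1)) (fun i => Hc H (k + 1 - i) * Pc H i)

lemma Pc_key (H : Matrix (Fin n) (Fin n) (PowerSeries A)) (hH : IsNilpotent (Hc H 0))
    (k : ℕ) :
    (k : A) • Pc H k + ∑ l ∈ Finset.range (k + 1), Hc H l * Pc H (k - l)
      = Pc H k * Hc H 0 := by
  cases k with
  | zero => simp [Pc_zero]
  | succ k =>
    have h := Phi_Pc H hH k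
    rw [Phi_apply] at h
    rw [Finset.sum_range_succ']
    have hre : ∑ l ∈ Finset.range (k + 1), Hc H (l + 1) * Pc H (k + 1 - (l + 1))
        = ∑ i ∈ Finset.range (k + 1), Hc H (k + 1 - i) * Pc H i := by
      rw [← Finset.sum_range_reflect]
      refine Finset.sum_congr rfl fun i hi => ?_
      have hi' := Finset.mem_range.mp hi
      have e2 : k + 1 - 1 - i + 1 = k + 1 - i := by omega
      rw [e2]
      have e3 : k + 1 - (k + 1 - i) = i := by omega
      rw [e3]
    rw [hre]
    have hgoal : ((k + 1 : ℕ) : A) • Pc H (k + 1) +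
        ((∑ i ∈ Finset.range (k + 1), Hc H (k + 1 - i) * Pc H i) + Hc H 0 * Pc H (k + 1 - 0))
        = Pc H (k + 1) * Hc H 0 := by
      rw [Nat.sub_zero]
      have := h
      -- from h : (k+1) • P + (Hc0 * P - P * Hc0) = -S, conclude goal
      linear_combination (norm := abel) h
    exact hgoal

/-- solution with initial condition `a` -/
noncomputable def sfun (H : Matrix (Fin n) (Fin n) (PowerSeries A)) (a : Fin n → A) :
    Fin n → PowerSeries A :=
  fun i => PowerSeries.mk fun k => (Pc H k).mulVec a i

lemma cvec_sfun (H : Matrix (Fin n) (Fin n) (PowerSeries A)) (a : Fin n → A) (k : ℕ) :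
    cvec k (sfun H a) = (Pc H k).mulVec a := by
  funext i; simp [cvec, sfun, coeff_mk]

lemma cvec_zero_sfun (H : Matrix (Fin n) (Fin n) (PowerSeries A)) (a : Fin n → A) :
    cvec 0 (sfun H a) = a := by
  rw [cvec_sfun, Pc_zero, Matrix.one_mulVec]

/-- `sfun` as a linear map -/
noncomputable def slin (H : Matrix (Fin n) (Fin n) (PowerSeries A)) :
    (Fin n → A) →ₗ[A] (Fin n → PowerSeries A) where
  toFun := sfun H
  map_add' a b := by
    funext i
    ext k
    simp [sfun, Matrix.mulVec_add, coeff_mk]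
  map_smul' c a := by
    funext i
    ext k
    simp [sfun, Matrix.mulVec_smul, coeff_mk, coeff_smul, smul_eq_mul]

lemma coeff_X_mul_derivative (f : PowerSeries A) (k : ℕ) :
    coeff k (X * derivative A f) = (k : A) * coeff k f := by
  cases k with
  | zero => simp
  | succ k =>
    rw [coeff_succ_X_mul, coeff_derivative]
    push_cast
    ring

lemma coeff_mulVec (H : Matrix (Fin n) (Fin n) (PowerSeries A))
    (v : Fin n → PowerSeries A) (k : ℕ) :
    cvec k (H.mulVec v) = ∑ l ∈ Finset.range (k + 1), (Hc H l).mulVec (cvec (k - l) v) := by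
  funext i
  simp only [cvec, Matrix.mulVec, dotProduct, map_sum, coeff_mul,
    Finset.Nat.sum_antidiagonal_eq_sum_range_succ_mk, Hc, Matrix.map_apply, Finset.sum_apply]
  rw [Finset.sum_comm]

lemma cvec_D (H : Matrix (Fin n) (Fin n) (PowerSeries A)) (v : Fin n → PowerSeries A) (k : ℕ) :
    cvec k (Dm H 0 v)
      = (k : A) • cvec k v + ∑ l ∈ Finset.range (k + 1), (Hc H l).mulVec (cvec (k - l) v) := by
  have h := coeff_mulVec H v k
  funext i
  simp only [Pi.add_apply, Pi.smul_apply, smul_eq_mul]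
  have h2 : cvec k (Dm H 0 v) i
      = coeff k (X * derivative A (v i)) + coeff k (H.mulVec v i) := by
    simp [cvec, Dm]
  rw [h2, coeff_X_mul_derivative]
  congr 1
  exact congrFun h i

lemma sum_mulVec {m : ℕ} (f : ℕ → Matrix (Fin n) (Fin n) A) (s : Finset ℕ) (a : Fin n → A) :
    ∑ l ∈ s, (f l).mulVec a = (∑ l ∈ s, f l).mulVec a := by
  funext i
  simp [Matrix.mulVec, dotProduct, Finset.sum_apply, Matrix.sum_apply, Finset.sum_mul]
  rw [Finset.sum_comm]

lemma D_sfun (H : Matrix (Fin n) (Fin n) (PowerSeries A)) (hH : IsNilpotent (Hc H 0))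
    (a : Fin n → A) :
    Dm H 0 (sfun H a) = sfun H ((Hc H 0).mulVec a) := by
  have hkey := Pc_key H hH
  funext i
  refine PowerSeries.ext fun k => ?_
  have h1 := congrFun (cvec_D H (sfun H a) k) i
  have h2 : ∀ l, cvec (k - l) (sfun H a) = (Pc H (k - l)).mulVec a := fun l => cvec_sfun H a _
  have lhs_eq : coeff k (Dm H 0 (sfun H a) i) = cvec k (Dm H 0 (sfun H a)) i := rfl
  rw [lhs_eq, h1]
  have h3 : ∑ l ∈ Finset.range (k + 1), (Hc H l).mulVec (cvec (k - l) (sfun H a))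
      = (∑ l ∈ Finset.range (k + 1), Hc H l * Pc H (k - l)).mulVec a := by
    rw [← sum_mulVec (m := 0) (fun l => Hc H l * Pc H (k - l))]
    refine Finset.sum_congr rfl fun l _ => ?_
    rw [h2 l, Matrix.mulVec_mulVec]
  rw [h3, cvec_sfun]
  have h4 : coeff k (sfun H ((Hc H 0).mulVec a) i)
      = (Pc H k * Hc H 0).mulVec a i := by
    simp [sfun, coeff_mk, Matrix.mulVec_mulVec]
  rw [h4, ← hkey k]
  have h5 : ((k : A) • Pc H k + ∑ l ∈ Finset.range (k + 1), Hc H l * Pc H (k - l)).mulVec a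
      = (k : A) • (Pc H k).mulVec a
        + (∑ l ∈ Finset.range (k + 1), Hc H l * Pc H (k - l)).mulVec a := by
    rw [Matrix.add_mulVec, Matrix.smul_mulVec]
  rw [h5]

lemma D_iter_sfun (H : Matrix (Fin n) (Fin n) (PowerSeries A)) (hH : IsNilpotent (Hc H 0))
    (a : Fin n → A) (N : ℕ) :
    (Dm H 0)^[N] (sfun H a) = sfun H (((Hc H 0) ^ N).mulVec a) := by
  induction N generalizing a with
  | zero => simp [Matrix.one_mulVec]
  | succ N ih =>
    rw [Function.iterate_succ_apply, D_sfun H hH, ih, Matrix.mulVec_mulVec, ← pow_succ]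

lemma bij_mulVecLin {B : Type*} [CommRing B] {M : Matrix (Fin n) (Fin n) B} (h : IsUnit M) :
    Function.Bijective (Matrix.mulVecLin M) := by
  obtain ⟨u, hu⟩ := h
  have h1 : ((↑u⁻¹ : Matrix (Fin n) (Fin n) B) * M) = 1 := by rw [← hu]; exact u.inv_mul
  have h2 : (M * (↑u⁻¹ : Matrix (Fin n) (Fin n) B)) = 1 := by rw [← hu]; exact u.mul_inv
  constructor
  · intro x y hxy
    simp only [Matrix.mulVecLin_apply] at hxy
    have h3 : (↑u⁻¹ : Matrix (Fin n) (Fin n) B).mulVec (M.mulVec x)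
        = (↑u⁻¹ : Matrix (Fin n) (Fin n) B).mulVec (M.mulVec y) := by rw [hxy]
    rwa [Matrix.mulVec_mulVec, Matrix.mulVec_mulVec, h1, Matrix.one_mulVec,
      Matrix.one_mulVec] at h3
  · intro y
    refine ⟨(↑u⁻¹ : Matrix (Fin n) (Fin n) B).mulVec y, ?_⟩
    rw [Matrix.mulVecLin_apply, Matrix.mulVec_mulVec, h2, Matrix.one_mulVec]

end Stmt3Aux

open Stmt3Aux in
/-- Let `A` be a commutative ring containing `ℚ` and `H` an `n × n` matrix over
`A⟦x⟧` with nilpotent constant term. Define `D v = x • v' + H ⬝ v` on `A⟦x⟧ⁿ` and let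
`V = {v | D^[N] v = 0 for some N}`. Then `V` is an `A`-submodule of `A⟦x⟧ⁿ`, free of rank `n`
over `A`, stable under `D`, the restriction of `D` to `V` is `A`-linear and nilpotent, and the
natural `A⟦x⟧`-linear map `A⟦x⟧ ⊗[A] V → A⟦x⟧ⁿ` is bijective. -/
theorem stmt3 (A : Type*) [CommRing A] [Algebra ℚ A] (n : ℕ)
    (H : Matrix (Fin n) (Fin n) (PowerSeries A))
    (hH : IsNilpotent (H.map (PowerSeries.constantCoeff (R := A))))
    (D : (Fin n → PowerSeries A) → (Fin n → PowerSeries A))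
    (hD : ∀ (v : Fin n → PowerSeries A) (i : Fin n),
      D v i = PowerSeries.X * PowerSeries.derivative A (v i) + H.mulVec v i) :
    ∃ V : Submodule A (Fin n → PowerSeries A),
      (V : Set (Fin n → PowerSeries A)) = {v | ∃ N : ℕ, D^[N] v = 0} ∧
      Nonempty (Module.Basis (Fin n) A V) ∧
      (∀ v ∈ V, D v ∈ V) ∧
      (∃ DV : V →ₗ[A] V,
        (∀ v : V, (DV v : Fin n → PowerSeries A) = D (v : Fin n → PowerSeries A)) ∧
        IsNilpotent DV) ∧
      Function.Bijective (LinearMap.liftBaseChange (PowerSeries A) V.subtype) := by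
  classical
  obtain ⟨M0, hM0⟩ := hH
  have hc0 : Hc H 0 = H.map (PowerSeries.constantCoeff (R := A)) := by
    ext i j
    simp [Hc, Matrix.map_apply, PowerSeries.coeff_zero_eq_constantCoeff_apply]
  have hHn : IsNilpotent (Hc H 0) := ⟨M0, by rw [hc0]; exact hM0⟩
  set M := M0 + 1 with hMdef
  have hM : Hc H 0 ^ M = 0 := by
    rw [hMdef, pow_succ, hc0, hM0, zero_mul]
  have hDeq : D = Dm H 0 := by
    funext v
    funext i
    rw [hD]
    simp [Dm]
  set s := slin H (n := n) (A := A) with hs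
  have hsfun : ∀ a, s a = sfun H a := fun a => rfl
  have hinj : Function.Injective s := by
    intro a b hab
    have h2 := congrArg (cvec 0) hab
    rwa [hsfun, hsfun, cvec_zero_sfun, cvec_zero_sfun] at h2
  have hDzero : Dm H 0 0 = 0 := by funext i; simp [Dm]
  refine ⟨LinearMap.range s, ?_, ?_, ?_, ?_, ?_⟩
  · -- set equality
    ext v
    simp only [SetLike.mem_coe, LinearMap.mem_range, Set.mem_setOf_eq]
    constructor
    · rintro ⟨a, rfl⟩
      refine ⟨M, ?_⟩
      rw [hDeq, hsfun, D_iter_sfun H hHn, hM, Matrix.zero_mulVec, ← hsfun, map_zero]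
    · rintro ⟨N, hN⟩
      rw [hDeq] at hN
      set a := cvec 0 v with ha
      set K := max N M with hK
      have hKv : (Dm H 0)^[K] v = 0 := by
        have h3 : K = (K - N) + N := by omega
        rw [h3, Function.iterate_add_apply, hN, Function.iterate_fixed hDzero]
      have hKs : (Dm H 0)^[K] (s a) = 0 := by
        rw [hsfun, D_iter_sfun H hHn]
        have h4 : Hc H 0 ^ K = 0 := by
          have h5 : K = M + (K - M) := by omega
          rw [h5, pow_add, hM, zero_mul]
        rw [h4, Matrix.zero_mulVec, ← hsfun, map_zero]
      have hsub : ∀ x y, Dm H 0 (x - y) = Dm H 0 x - Dm H 0 y := by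
        intro x y
        funext i
        simp only [Dm, Pi.sub_apply, map_sub, Matrix.mulVec_sub, zero_smul, smul_eq_mul,
          zero_nsmul, add_zero, mul_sub]
        ring
      have hitsub : ∀ (L : ℕ) x y,
          (Dm H 0)^[L] (x - y) = (Dm H 0)^[L] x - (Dm H 0)^[L] y := by
        intro L
        induction L with
        | zero => intro x y; simp
        | succ L ih =>
          intro x y
          rw [Function.iterate_succ_apply, hsub, ih, Function.iterate_succ_apply,
            Function.iterate_succ_apply]
      have hu : (Dm H 0)^[K] (v - s a) = 0 := by
        rw [hitsub, hKv, hKs, sub_zero]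
      have hcz : cvec 0 (v - s a) = 0 := by
        have h1 : cvec 0 (s a) = a := by rw [hsfun]; exact cvec_zero_sfun H a
        funext i
        have h6 : cvec 0 (v - s a) i = cvec 0 v i - cvec 0 (s a) i := by
          simp [cvec, map_sub]
        rw [h6, h1, ← ha]
        simp
      have h7 := eq_zero_of_iter H hHn (v - s a) K hu hcz
      exact ⟨a, (sub_eq_zero.mp h7).symm⟩
  · exact ⟨(Pi.basisFun A (Fin n)).map (LinearEquiv.ofInjective s hinj)⟩
  · rintro v ⟨a, rfl⟩
    refine ⟨(Hc H 0).mulVec a, ?_⟩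
    rw [hDeq, hsfun, hsfun, D_sfun H hHn]
  · set e := LinearEquiv.ofInjective s hinj with he
    set DV := (e.toLinearMap.comp (Matrix.mulVecLin (Hc H 0))).comp e.symm.toLinearMap with hDV
    have hDVapp : ∀ v, DV v = e (Matrix.mulVecLin (Hc H 0) (e.symm v)) := fun v => rfl
    have hse : ∀ v : ↥(LinearMap.range s), s (e.symm v) = ↑v := by
      intro v
      have h8 : (↑(e (e.symm v)) : Fin n → PowerSeries A) = s (e.symm v) :=
        LinearEquiv.ofInjective_apply s (e.symm v)
      rw [← h8, e.apply_symm_apply]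
    refine ⟨DV, ?_, ?_⟩
    · intro v
      rw [hDVapp, LinearEquiv.ofInjective_apply]
      rw [Matrix.mulVecLin_apply, hDeq, ← hse v, hsfun, hsfun, D_sfun H hHn]
    · refine ⟨M, ?_⟩
      have hpow : ∀ (K : ℕ) (v : ↥(LinearMap.range s)),
          (DV ^ K) v = e (Matrix.mulVecLin ((Hc H 0) ^ K) (e.symm v)) := by
        intro K
        induction K with
        | zero =>
          intro v
          simp [pow_zero, Matrix.mulVecLin_one]
        | succ K ih =>
          intro v
          rw [pow_succ, Module.End.mul_apply, hDVapp, ih, e.symm_apply_apply,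
            Matrix.mulVecLin_apply, Matrix.mulVecLin_apply, Matrix.mulVec_mulVec, ← pow_succ,
            ← Matrix.mulVecLin_apply]
      apply LinearMap.ext
      intro v
      rw [hpow M v, hM]
      simp
  · set e := LinearEquiv.ofInjective s hinj with he
    set b := (Pi.basisFun A (Fin n)).map e with hb
    set β := b.baseChange (PowerSeries A) with hβ
    set g := β.equiv (Pi.basisFun (PowerSeries A) (Fin n)) (Equiv.refl _) with hg
    set Pmat : Matrix (Fin n) (Fin n) (PowerSeries A) :=
      Matrix.of fun i j => PowerSeries.mk fun k => Pc H k i j with hPmat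
    have hcol : ∀ j, s (Pi.single j 1) = fun i => Pmat i j := by
      intro j
      funext i
      ext k
      simp [hsfun, sfun, coeff_mk, Matrix.mulVec_single, hPmat]
    have hPunit : IsUnit Pmat := by
      rw [Matrix.isUnit_iff_isUnit_det, PowerSeries.isUnit_iff_constantCoeff]
      have h9 : (PowerSeries.constantCoeff (R := A)) Pmat.det
          = (Pmat.map (PowerSeries.constantCoeff (R := A))).det := by
        rw [RingHom.map_det, RingHom.mapMatrix_apply]
      rw [h9]
      have h10 : Pmat.map (PowerSeries.constantCoeff (R := A)) = 1 := by
        ext i j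
        have := congrFun (congrFun (congrArg (fun m => (m : Matrix (Fin n) (Fin n) A))
          (Pc_zero H)) i) j
        simp only [hPmat, Matrix.map_apply, Matrix.of_apply, PowerSeries.constantCoeff_mk]
        exact this
      rw [h10, Matrix.det_one]
      exact isUnit_one
    have hcomp : LinearMap.liftBaseChange (PowerSeries A) (LinearMap.range s).subtype
        = (Matrix.mulVecLin Pmat).comp g.toLinearMap := by
      apply β.ext
      intro j
      rw [hβ, Module.Basis.baseChange_apply, LinearMap.liftBaseChange_tmul, one_smul]
      have hβj : β j = 1 ⊗ₜ[A] b j := Module.Basis.baseChange_apply _ _ _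
      have hrhs : ((Matrix.mulVecLin Pmat).comp g.toLinearMap) (1 ⊗ₜ[A] b j)
          = Pmat.mulVec (Pi.single j 1) := by
        rw [LinearMap.comp_apply, LinearEquiv.coe_coe, ← hβj, hg, Module.Basis.equiv_apply,
          Equiv.refl_apply, Pi.basisFun_apply, Matrix.mulVecLin_apply]
      rw [hrhs, Matrix.mulVec_single]
      have hlhs : ((LinearMap.range s).subtype) (b j) = s (Pi.single j 1) := by
        rw [hb, Module.Basis.map_apply, Pi.basisFun_apply]
        exact LinearEquiv.ofInjective_apply s (h := hinj) _
      rw [hlhs, hcol]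
      funext i
      simp
    rw [hcomp, LinearMap.coe_comp, LinearEquiv.coe_coe]
    exact (bij_mulVecLin hPunit).comp g.bijective
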